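/- arXiv:1705.05408 — 5 statements merged into one kernel-verified Lean document; each statement's English description precedes it below -/
import Mathlib

section
/- For $\mu=(D,F)\in\Lambda=\{(D,F): F>1,\ D<-1/2,\ D+F>0\}$, the quadratic $q_\mu(x)=ax^2+bx+c$ with $a=\tfrac{D}{2(1-F)}$, $b=\tfrac{D-F+1}{(1-F)(1-2F)}$, $c=\tfrac{F-D-1}{2F(1-F)(1-2F)}$ satisfies $a>0$, $b^2-4ac>0$, and its two real roots $p_1=\tfrac{-b-\sqrt{b^2-4ac}}{2a}$ and $p_2=\tfrac{-b+\sqrt{b^2-4ac}}{2a}$ satisfy $0<p_1<p_2$. -/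
open Real

noncomputable def aQ (D F : ℝ) : ℝ := D/(2*(1-F))
noncomputable def bQ (D F : ℝ) : ℝ := (D-F+1)/((1-F)*(1-2*F))
noncomputable def cQ (D F : ℝ) : ℝ := (F-D-1)/(2*F*(1-F)*(1-2*F))
noncomputable def discQ (D F : ℝ) : ℝ := (bQ D F)^2 - 4*(aQ D F)*(cQ D F)
noncomputable def p1Q (D F : ℝ) : ℝ := (-(bQ D F) - Real.sqrt (discQ D F))/(2*(aQ D F))
noncomputable def p2Q (D F : ℝ) : ℝ := (-(bQ D F) + Real.sqrt (discQ D F))/(2*(aQ D F))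

/-- For `(D,F) ∈ Λ`, the quadratic `q_μ` has positive leading coefficient, positive
discriminant and its two roots satisfy `0 < p₁ < p₂`. -/
theorem roots_of_qmu (D F : ℝ) (hF : 1 < F) (hD : D < -(1/2)) (hDF : 0 < D + F) :
    0 < aQ D F ∧ 0 < discQ D F ∧ 0 < p1Q D F ∧ p1Q D F < p2Q D F := by
  have hF0 : (0:ℝ) < F := by linarith
  have h1F : 1 - F < 0 := by linarith
  have h12F : 1 - 2*F < 0 := by linarith
  have hE : 0 < F - D - 1 := by linarith
  have hmm : 0 < (1-F)*(1-2*F) := mul_pos_of_neg_of_neg h1F h12F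
  have ha : 0 < aQ D F := by
    rw [aQ, div_pos_iff]; right; constructor <;> linarith
  have hb : bQ D F < 0 := div_neg_of_neg_of_pos (by linarith) hmm
  have hc : 0 < cQ D F := by
    apply div_pos hE
    nlinarith
  have hdisc_eq : discQ D F = (F-D-1)*((F-1)*(F+D)) / (F*((1-F)*(1-2*F))^2) := by
    have h1 : (1-F) ≠ 0 := by linarith
    have h2 : (1-2*F) ≠ 0 := by linarith
    unfold discQ aQ bQ cQ
    field_simp
    ring
  have hdisc : 0 < discQ D F := by
    rw [hdisc_eq]
    apply div_pos
    · exact mul_pos hE (mul_pos (by linarith) (by linarith : (0:ℝ) < F + D))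
    · exact mul_pos hF0 (pow_pos hmm 2)
  refine ⟨ha, hdisc, ?_, ?_⟩
  · set s := Real.sqrt (discQ D F) with hs_def
    have hs : 0 < s := Real.sqrt_pos.mpr hdisc
    have hs2 : s^2 = discQ D F := Real.sq_sqrt hdisc.le
    have hac : 0 < aQ D F * cQ D F := mul_pos ha hc
    have hlt : s^2 < (bQ D F)^2 := by
      rw [hs2]; unfold discQ; nlinarith
    have hnum : 0 < -(bQ D F) - s := by nlinarith
    rw [p1Q]
    exact div_pos hnum (by linarith)
  · rw [p1Q, p2Q]
    have hs : 0 < Real.sqrt (discQ D F) := Real.sqrt_pos.mpr hdisc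
    exact (div_lt_div_iff_of_pos_right (by linarith : 0 < 2*aQ D F)).mpr (by linarith)
end

section
/- Fix $\mu=(D,F)\in\Lambda$ and let $\phi(z)=\tfrac{z^{-F}-1}{F}$ for $z>0$. Then the coordinate change $(u,v)=(\phi(1-x),(1-x)^{-F}y)$, defined for $x<1$, transforms the Loud system $\dot x=-y+xy$, $\dot y=x+Dx^2+Fy^2$ into the potential system $\dot u=-v$, $\dot v=(Fu+1)\bigl((Fu+1)^{-1/F}-1\bigr)\bigl(D(Fu+1)^{-1/F}-D-1\bigr)$. -/
open Real

/-- The coordinate change `(u,v) = (φ(1-x), (1-x)^(-F) y)`, `φ(z) = (z^(-F)-1)/F`,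
transforms the Loud system `ẋ = -y+xy, ẏ = x+Dx²+Fy²` (for solutions staying in `x < 1`)
into the potential system
`u̇ = -v, v̇ = (Fu+1)((Fu+1)^(-1/F)-1)(D(Fu+1)^(-1/F)-D-1)`. -/
theorem loud_to_potential (D F : ℝ) (hF : 1 < F) (hD : D < -(1/2)) (hDF : 0 < D + F)
    (x y : ℝ → ℝ)
    (hx : ∀ t, HasDerivAt x (-(y t) + x t * y t) t)
    (hy : ∀ t, HasDerivAt y (x t + D * (x t)^2 + F * (y t)^2) t)
    (hlt : ∀ t, x t < 1) :
    (∀ t, HasDerivAt (fun s => ((1 - x s) ^ (-F) - 1) / F)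
        (-((1 - x t) ^ (-F) * y t)) t)
    ∧ (∀ t, HasDerivAt (fun s => (1 - x s) ^ (-F) * y s)
        ((F * (((1 - x t) ^ (-F) - 1) / F) + 1)
          * ((F * (((1 - x t) ^ (-F) - 1) / F) + 1) ^ (-(1/F)) - 1)
          * (D * (F * (((1 - x t) ^ (-F) - 1) / F) + 1) ^ (-(1/F)) - D - 1)) t) := by
  have hF0 : F ≠ 0 := by linarith
  have hzpos : ∀ t, (0:ℝ) < 1 - x t := fun t => by linarith [hlt t]
  -- derivative of 1 - x
  have hz : ∀ t, HasDerivAt (fun s => 1 - x s) (y t * (1 - x t)) t := by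
    intro t
    have := (hx t).const_sub 1
    refine this.congr_deriv ?_
    ring
  -- derivative of (1-x)^(-F)
  have hP : ∀ t, HasDerivAt (fun s => (1 - x s) ^ (-F))
      (-F * ((1 - x t) ^ (-F)) * y t) t := by
    intro t
    have h1 := (Real.hasDerivAt_rpow_const (p := -F)
      (Or.inl (ne_of_gt (hzpos t)))).comp t (hz t)
    refine h1.congr_deriv ?_
    have : (1 - x t) ^ (-F - 1) * (1 - x t) = (1 - x t) ^ (-F) := by
      rw [← Real.rpow_add_one (ne_of_gt (hzpos t))]
      ring_nf
    rw [← this]; ring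
  have hFu : ∀ t, F * (((1 - x t) ^ (-F) - 1) / F) + 1 = (1 - x t) ^ (-F) := by
    intro t; field_simp; ring
  have hpow : ∀ t, ((1 - x t) ^ (-F)) ^ (-(1/F)) = 1 - x t := by
    intro t
    rw [← Real.rpow_mul (hzpos t).le]
    have h2 : -F * -(1/F) = 1 := by field_simp
    rw [h2, Real.rpow_one]
  constructor
  · intro t
    have := ((hP t).sub_const 1).div_const F
    refine this.congr_deriv ?_
    field_simp
  · intro t
    have := (hP t).mul (hy t)
    refine this.congr_deriv ?_
    rw [hFu t, hpow t]
    ring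
end

section
/- Let $\mu=(D,F)\in\Lambda$ and let $V_\mu$, $h_0(\mu)=\tfrac{F-D-1}{2F(F-1)(2F-1)}$ be as above. Then $\lim_{u\to(-1/F)^+}\ \bigl(h_0(\mu)-V_\mu(u)\bigr)\,(Fu+1)^{\frac{2}{F}-2}=\tfrac{D}{2-2F}$, and this limit is nonzero. -/
open Real Filter Topology

/-- Quantifier of `h₀(μ) - V_μ` at the left endpoint `u = -1/F`:
`(h₀(μ) - V_μ(u)) (Fu+1)^(2/F-2) → D/(2-2F) ≠ 0` as `u → (-1/F)⁺`. -/
theorem quantifier_h0_minus_V_left (D F : ℝ) (hF : 1 < F) (hD : D < -(1/2))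
    (hDF : 0 < D + F) (V : ℝ → ℝ)
    (hV : ∀ u, -1/F < u →
      (F-D-1)/(2*F*(F-1)*(2*F-1)) - V u
        = ((F*u+1) ^ (-(1/F))) ^ (-(2*F)) *
            (D/(2-2*F) * ((F*u+1) ^ (-(1/F)))^2
              + (1+2*D)/(2*F-1) * ((F*u+1) ^ (-(1/F))) - (D+1)/(2*F))) :
    Tendsto (fun u => ((F-D-1)/(2*F*(F-1)*(2*F-1)) - V u) * (F*u+1) ^ (2/F - 2))
      (𝓝[>] (-1/F)) (𝓝 (D/(2-2*F)))
    ∧ D/(2-2*F) ≠ 0 := by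
  have hF0 : (0:ℝ) < F := by linarith
  have hFne : F ≠ 0 := ne_of_gt hF0
  constructor
  · -- eventual equality with nice function
    have heq : (fun u => ((F-D-1)/(2*F*(F-1)*(2*F-1)) - V u) * (F*u+1) ^ (2/F - 2))
        =ᶠ[𝓝[>] (-1/F)]
        (fun u => D/(2-2*F) + (1+2*D)/(2*F-1) * (F*u+1) ^ (1/F)
            - (D+1)/(2*F) * (F*u+1) ^ (2/F)) := by
      filter_upwards [self_mem_nhdsWithin] with u hu
      have hu' : -1/F < u := hu
      have hw : 0 < F*u+1 := by
        have h := (div_lt_iff₀ hF0).mp hu'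
        nlinarith
      set w := F*u+1 with hwdef
      rw [hV u hu']
      rw [← Real.rpow_natCast (w ^ (-(1/F))) 2, ← Real.rpow_mul hw.le,
        ← Real.rpow_mul hw.le]
      have e1 : (-(1/F))*(-(2*F)) = 2 := by field_simp
      have e2 : (-(1/F))*((2:ℕ):ℝ) = -(2/F) := by push_cast; field_simp
      rw [e1, e2]
      have key : ∀ a b : ℝ, w ^ a * w ^ b = w ^ (a+b) := fun a b =>
        (Real.rpow_add hw a b).symm
      have h2 : w ^ (2:ℝ) * w ^ (-(2/F)) * w ^ (2/F-2) = 1 := by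
        rw [key, key, show (2:ℝ) + -(2/F) + (2/F-2) = 0 from by ring, Real.rpow_zero]
      have h3 : w ^ (2:ℝ) * w ^ (-(1/F)) * w ^ (2/F-2) = w ^ (1/F) := by
        rw [key, key, show (2:ℝ) + -(1/F) + (2/F-2) = 1/F from by ring]
      have h4 : w ^ (2:ℝ) * w ^ (2/F-2) = w ^ (2/F) := by
        rw [key, show (2:ℝ) + (2/F-2) = 2/F from by ring]
      calc w ^ (2:ℝ) * (D/(2-2*F) * w ^ (-(2/F)) + (1+2*D)/(2*F-1) * w ^ (-(1/F))
              - (D+1)/(2*F)) * w ^ (2/F-2)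
          = D/(2-2*F) * (w ^ (2:ℝ) * w ^ (-(2/F)) * w ^ (2/F-2))
            + (1+2*D)/(2*F-1) * (w ^ (2:ℝ) * w ^ (-(1/F)) * w ^ (2/F-2))
            - (D+1)/(2*F) * (w ^ (2:ℝ) * w ^ (2/F-2)) := by ring
        _ = D/(2-2*F) + (1+2*D)/(2*F-1) * w ^ (1/F) - (D+1)/(2*F) * w ^ (2/F) := by
            rw [h2, h3, h4]; ring
    rw [Filter.tendsto_congr' heq]
    have h1 : Tendsto (fun u => F*u+1) (𝓝[>] (-1/F)) (𝓝 0) := by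
      have : Tendsto (fun u => F*u+1) (𝓝 (-1/F)) (𝓝 (F*(-1/F)+1)) := by
        exact ((continuous_const.mul continuous_id).add continuous_const).tendsto _
      have hval : F*(-1/F)+1 = 0 := by field_simp; norm_num
      rw [hval] at this
      exact this.mono_left nhdsWithin_le_nhds
    have hp1 : Tendsto (fun x : ℝ => x ^ (1/F)) (𝓝 0) (𝓝 0) := by
      have := (Real.continuousAt_rpow_const 0 (1/F) (Or.inr (by positivity))).tendsto
      simpa [Real.zero_rpow (by positivity : F⁻¹ ≠ 0)] using this
    have hp2 : Tendsto (fun x : ℝ => x ^ (2/F)) (𝓝 0) (𝓝 0) := by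
      have := (Real.continuousAt_rpow_const 0 (2/F) (Or.inr (by positivity))).tendsto
      simpa [Real.zero_rpow (by positivity : (2:ℝ)/F ≠ 0)] using this
    have h : Tendsto (fun u => D/(2-2*F) + (1+2*D)/(2*F-1) * ((fun x : ℝ => x ^ (1/F)) ∘ (fun u => F*u+1)) u
          - (D+1)/(2*F) * ((fun x : ℝ => x ^ (2/F)) ∘ (fun u => F*u+1)) u)
        (𝓝[>] (-1/F)) (𝓝 (D/(2-2*F) + (1+2*D)/(2*F-1) * 0 - (D+1)/(2*F) * 0)) :=
      (tendsto_const_nhds.add ((hp1.comp h1).const_mul _)).sub ((hp2.comp h1).const_mul _)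
    simpa using h
  · apply div_ne_zero
    · linarith
    · nlinarith
end

section
/- For $F\in(1,3/2)$, one has $F^F(F-1)^{1-F}+2-3F>0$. -/
open Real Set

noncomputable def phiL (t : ℝ) : ℝ :=
  (1+t) * Real.log (1+t) - t * Real.log t - Real.log (1+3*t)

noncomputable def psiL (t : ℝ) : ℝ :=
  Real.log (1+t) - Real.log t - 3/(1+3*t)

lemma hasDerivAt_phiL {t : ℝ} (ht : 0 < t) : HasDerivAt phiL (psiL t) t := by
  have h1t : (1:ℝ)+t ≠ 0 := by linarith
  have h3t : (1:ℝ)+3*t ≠ 0 := by linarith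
  have hA : HasDerivAt (fun t : ℝ => (1+t) * Real.log (1+t)) ((Real.log (1+t) + 1) * 1) t := by
    exact (Real.hasDerivAt_mul_log h1t).comp t ((hasDerivAt_id t).const_add 1)
  have hB : HasDerivAt (fun t : ℝ => t * Real.log t) (Real.log t + 1) t :=
    Real.hasDerivAt_mul_log ht.ne'
  have hC : HasDerivAt (fun t : ℝ => Real.log (1+3*t)) ((1+3*t)⁻¹ * (3*1)) t := by
    exact (Real.hasDerivAt_log h3t).comp t (((hasDerivAt_id t).const_mul 3).const_add 1)
  have h := (hA.sub hB).sub hC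
  have : psiL t = (Real.log (1+t) + 1) * 1 - (Real.log t + 1) - (1+3*t)⁻¹ * (3*1) := by
    unfold psiL; field_simp; ring
  rw [this]
  exact h

lemma hasDerivAt_psiL {t : ℝ} (ht : 0 < t) :
    HasDerivAt psiL ((3*t-1)/(t*(1+t)*(1+3*t)^2)) t := by
  have h1t : (1:ℝ)+t ≠ 0 := by linarith
  have h3t : (1:ℝ)+3*t ≠ 0 := by linarith
  have hA : HasDerivAt (fun t : ℝ => Real.log (1+t)) ((1+t)⁻¹ * 1) t :=
    (Real.hasDerivAt_log h1t).comp t ((hasDerivAt_id t).const_add 1)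
  have hB : HasDerivAt Real.log t⁻¹ t := Real.hasDerivAt_log ht.ne'
  have hC : HasDerivAt (fun t : ℝ => 3 * (1+3*t)⁻¹) (3 * (-((1+3*t)^2)⁻¹ * (3*1))) t := by
    exact ((hasDerivAt_inv h3t).comp t (((hasDerivAt_id t).const_mul 3).const_add 1)).const_mul 3
  have h := (hA.sub hB).sub hC
  have hfun : psiL = fun t : ℝ => Real.log (1+t) - Real.log t - 3 * (1+3*t)⁻¹ := by
    funext x; unfold psiL; rw [div_eq_mul_inv]
  rw [hfun]
  have : (3*t-1)/(t*(1+t)*(1+3*t)^2)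
      = (1+t)⁻¹ * 1 - t⁻¹ - 3 * (-((1+3*t)^2)⁻¹ * (3*1)) := by
    field_simp
    ring
  rw [this]
  exact h

lemma log3_lt : Real.log 3 < 6/5 := by
  rw [Real.log_lt_iff_lt_exp (by norm_num)]
  have h1 : Real.exp (6/5 : ℝ) = Real.exp 1 * Real.exp (1/5) := by
    rw [← Real.exp_add]; norm_num
  have h2 : (1:ℝ)/5 + 1 ≤ Real.exp (1/5) := Real.add_one_le_exp (1/5 : ℝ)
  have h3 := Real.exp_one_gt_d9
  nlinarith [Real.exp_pos (1/5 : ℝ)]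

lemma psiL_half_neg : psiL (1/2) < 0 := by
  have h32 : Real.log (1 + (1:ℝ)/2) = Real.log 3 - Real.log 2 := by
    rw [show (1 + (1:ℝ)/2) = 3/2 by norm_num, Real.log_div] <;> norm_num
  have h12 : Real.log ((1:ℝ)/2) = -Real.log 2 := by
    rw [show ((1:ℝ)/2) = 2⁻¹ by norm_num, Real.log_inv]
  unfold psiL
  rw [h32, h12]
  have := log3_lt
  norm_num
  linarith

lemma phiL_half_pos : 0 < phiL (1/2) := by
  have h32 : Real.log (1 + (1:ℝ)/2) = Real.log 3 - Real.log 2 := by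
    rw [show (1 + (1:ℝ)/2) = 3/2 by norm_num, Real.log_div] <;> norm_num
  have h12 : Real.log ((1:ℝ)/2) = -Real.log 2 := by
    rw [show ((1:ℝ)/2) = 2⁻¹ by norm_num, Real.log_inv]
  have h52 : Real.log (1 + 3*((1:ℝ)/2)) = Real.log 5 - Real.log 2 := by
    rw [show (1 + 3*((1:ℝ)/2)) = 5/2 by norm_num, Real.log_div] <;> norm_num
  have h27 : Real.log (27:ℝ) = 3 * Real.log 3 := by
    rw [show (27:ℝ) = 3^(3:ℕ) by norm_num, Real.log_pow]; norm_num
  have h25 : Real.log (25:ℝ) = 2 * Real.log 5 := by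
    rw [show (25:ℝ) = 5^(2:ℕ) by norm_num, Real.log_pow]; norm_num
  have key : Real.log (25:ℝ) < Real.log 27 := Real.log_lt_log (by norm_num) (by norm_num)
  unfold phiL
  rw [h32, h12, h52]
  nlinarith [key, h27, h25]

lemma phiL_third_pos : 0 < phiL (1/3) := by
  have h43 : Real.log (1 + (1:ℝ)/3) = 2 * Real.log 2 - Real.log 3 := by
    rw [show (1 + (1:ℝ)/3) = 4/3 by norm_num, Real.log_div (by norm_num) (by norm_num),
      show (4:ℝ) = 2^(2:ℕ) by norm_num, Real.log_pow]; norm_num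
  have h13 : Real.log ((1:ℝ)/3) = -Real.log 3 := by
    rw [show ((1:ℝ)/3) = 3⁻¹ by norm_num, Real.log_inv]
  have h2 : Real.log (1 + 3*((1:ℝ)/3)) = Real.log 2 := by norm_num
  have h32' : Real.log (32:ℝ) = 5 * Real.log 2 := by
    rw [show (32:ℝ) = 2^(5:ℕ) by norm_num, Real.log_pow]; norm_num
  have h27 : Real.log (27:ℝ) = 3 * Real.log 3 := by
    rw [show (27:ℝ) = 3^(3:ℕ) by norm_num, Real.log_pow]; norm_num
  have key : Real.log (27:ℝ) < Real.log 32 := Real.log_lt_log (by norm_num) (by norm_num)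
  unfold phiL
  rw [h43, h13, h2]
  nlinarith [key, h27, h32']

lemma contPsi : ContinuousOn psiL {t : ℝ | 0 < t} := by
  unfold psiL
  apply ContinuousOn.sub
  apply ContinuousOn.sub
  · apply Real.continuousOn_log.comp
      ((continuous_const.add continuous_id).continuousOn)
    intro x hx; simp only [mem_compl_iff, mem_singleton_iff, id_eq]
    have : (0:ℝ) < x := hx
    intro h; simp only [Pi.add_apply, id_eq] at h; linarith
  · apply Real.continuousOn_log.mono
    intro x hx; simp only [mem_compl_iff, mem_singleton_iff]
    have : (0:ℝ) < x := hx
    intro h; linarith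
  · apply ContinuousOn.div continuousOn_const
      ((continuous_const.add (continuous_const.mul continuous_id)).continuousOn)
    intro x hx
    have : (0:ℝ) < x := hx
    simp only [Pi.add_apply, Pi.mul_apply, id_eq]
    intro h; linarith

lemma contPhi : ContinuousOn phiL (Icc 0 (1/2)) := by
  unfold phiL
  apply ContinuousOn.sub
  apply ContinuousOn.sub
  · exact (Real.continuous_mul_log.comp (continuous_const.add continuous_id)).continuousOn
  · exact Real.continuous_mul_log.continuousOn
  · apply Real.continuousOn_log.comp
      ((continuous_const.add (continuous_const.mul continuous_id)).continuousOn)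
    intro x hx
    simp only [mem_compl_iff, mem_singleton_iff, id_eq]
    have : (0:ℝ) ≤ x := hx.1
    intro h; simp only [Pi.add_apply, Pi.mul_apply, id_eq] at h; linarith

lemma psiAnti : StrictAntiOn psiL (Ioc 0 (1/3)) := by
  apply strictAntiOn_of_deriv_neg (convex_Ioc _ _)
    (contPsi.mono (fun x hx => hx.1))
  intro x hx
  rw [interior_Ioc] at hx
  obtain ⟨hx0, hx3⟩ := hx
  rw [(hasDerivAt_psiL hx0).deriv]
  apply div_neg_of_neg_of_pos
  · linarith
  · positivity

lemma psiMono : StrictMonoOn psiL (Icc (1/3) (1/2)) := by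
  apply strictMonoOn_of_deriv_pos (convex_Icc _ _)
    (contPsi.mono (fun x hx => by
      have : (1:ℝ)/3 ≤ x := hx.1; show (0:ℝ) < x; linarith))
  intro x hx
  rw [interior_Icc] at hx
  obtain ⟨hx0, hx3⟩ := hx
  have hx0' : (0:ℝ) < x := by linarith
  rw [(hasDerivAt_psiL hx0').deriv]
  apply div_pos
  · linarith
  · positivity

lemma phiL_pos {t : ℝ} (h0 : 0 < t) (h2 : t < 1/2) : 0 < phiL t := by
  rcases le_or_gt t (1/3) with hle | hgt
  · by_cases hps : 0 < psiL t
    · -- phi increasing on [0, t]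
      have hmono : StrictMonoOn phiL (Icc 0 t) := by
        apply strictMonoOn_of_deriv_pos (convex_Icc _ _)
          (contPhi.mono (Icc_subset_Icc le_rfl (by linarith)))
        intro x hx
        rw [interior_Icc] at hx
        obtain ⟨hx0, hxt⟩ := hx
        rw [(hasDerivAt_phiL hx0).deriv]
        have : psiL t < psiL x := psiAnti ⟨hx0, by linarith⟩ ⟨h0, hle⟩ hxt
        linarith
      have h00 : phiL 0 = 0 := by unfold phiL; norm_num
      have := hmono (left_mem_Icc.mpr h0.le) (right_mem_Icc.mpr h0.le) h0
      linarith
    · push_neg at hps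
      rcases eq_or_lt_of_le hle with heq | hlt
      · rw [heq]; exact phiL_third_pos
      · have hanti : StrictAntiOn phiL (Icc t (1/3)) := by
          apply strictAntiOn_of_deriv_neg (convex_Icc _ _)
            (contPhi.mono (Icc_subset_Icc h0.le (by norm_num)))
          intro x hx
          rw [interior_Icc] at hx
          obtain ⟨hxt, hx3⟩ := hx
          have hx0 : (0:ℝ) < x := by linarith
          rw [(hasDerivAt_phiL hx0).deriv]
          have : psiL x < psiL t := psiAnti ⟨h0, hle⟩ ⟨hx0, hx3.le⟩ hxt
          linarith
        have := hanti (left_mem_Icc.mpr hlt.le) (right_mem_Icc.mpr hlt.le) hlt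
        linarith [phiL_third_pos]
  · -- t in (1/3, 1/2): phi decreasing on [1/3, 1/2]
    have hanti : StrictAntiOn phiL (Icc (1/3) (1/2)) := by
      apply strictAntiOn_of_deriv_neg (convex_Icc _ _)
        (contPhi.mono (Icc_subset_Icc (by norm_num) le_rfl))
      intro x hx
      rw [interior_Icc] at hx
      obtain ⟨hx3, hx2⟩ := hx
      have hx0 : (0:ℝ) < x := by linarith
      rw [(hasDerivAt_phiL hx0).deriv]
      have : psiL x < psiL (1/2) :=
        psiMono ⟨hx3.le, hx2.le⟩ (right_mem_Icc.mpr (by norm_num)) hx2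
      linarith [psiL_half_neg]
    have := hanti ⟨hgt.le, h2.le⟩ (right_mem_Icc.mpr (by norm_num)) h2
    linarith [phiL_half_pos]

/-- For `F ∈ (1,3/2)`, one has `F^F (F-1)^(1-F) + 2 - 3F > 0`. -/
theorem key_inequality (F : ℝ) (hF : 1 < F) (hF2 : F < 3/2) :
    0 < F ^ F * (F - 1) ^ (1 - F) + 2 - 3*F := by
  have h1 : (0:ℝ) < F := by linarith
  have h2 : (0:ℝ) < F - 1 := by linarith
  have h3 : (0:ℝ) < 3*F - 2 := by linarith
  have hphi := phiL_pos (t := F - 1) (by linarith) (by linarith)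
  have hval : phiL (F-1) = F * Real.log F + (1-F)*Real.log (F-1) - Real.log (3*F-2) := by
    unfold phiL
    have e1 : 1 + (F-1) = F := by ring
    have e2 : 1 + 3*(F-1) = 3*F-2 := by ring
    rw [e1, e2]; ring
  have hlog : Real.log (3*F - 2) < F * Real.log F + (1-F) * Real.log (F-1) := by
    rw [hval] at hphi; linarith
  have hrw : F ^ F * (F - 1) ^ (1 - F)
      = Real.exp (F * Real.log F + (1-F) * Real.log (F-1)) := by
    rw [Real.rpow_def_of_pos h1, Real.rpow_def_of_pos h2, ← Real.exp_add]
    ring_nf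
  have hexp := Real.exp_lt_exp.mpr hlog
  rw [Real.exp_log h3] at hexp
  rw [hrw]
  linarith
end

section
/- For $\mu=(D,F)\in\Lambda$ with $F\neq 2$, define $\mathscr{R}_\mu=\tfrac{(V_\mu')^2-2V_\mu V_\mu''}{(V_\mu')^3}$. Then $\lim_{u\to(-1/F)^+}\bigl(h_0(\mu)-V_\mu(u)\bigr)\mathscr{R}_\mu(u)\,(Fu+1)^{1-\frac{2}{F}}=\tfrac{(F-2)h_0(\mu)}{D(F-1)}$, and this limit is nonzero. -/
set_option maxHeartbeats 2000000
open Real Filter Topology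

lemma hd_affine (F u : ℝ) : HasDerivAt (fun u : ℝ => F*u+1) F u := by
  simpa using ((hasDerivAt_id u).const_mul F).add_const 1

lemma hd_pow (F p u : ℝ) (ht : F*u+1 ≠ 0) :
    HasDerivAt (fun u => (F*u+1) ^ p) (p * (F*u+1)^(p-1) * F) u := by
  have := (Real.hasDerivAt_rpow_const (p := p) (Or.inl ht)).comp u (hd_affine F u)
  exact this

lemma form1 (D F t : ℝ) (ht : 0 < t) :
    t * (t ^ (-(1/F)) - 1) * (D * t ^ (-(1/F)) - D - 1)
      = D * t^(1-2/F) - (2*D+1)*t^(1-1/F) + (D+1)*t := by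
  have h1 : t^(1-2/F) = t * t^(-(1/F)) * t^(-(1/F)) := by
    rw [show (1-2/F) = 1 + -(1/F) + -(1/F) by ring, rpow_add ht, rpow_add ht, rpow_one]
  have h2 : t^(1-1/F) = t * t^(-(1/F)) := by
    rw [show (1-1/F) = 1 + -(1/F) by ring, rpow_add ht, rpow_one]
  rw [h1, h2]; ring

noncomputable def Wf (D F u : ℝ) : ℝ :=
  (F-D-1)/(2*F*(F-1)*(2*F-1)) + D/(2*(F-1))*(F*u+1)^(2-2/F)
    - (2*D+1)/(2*F-1)*(F*u+1)^(2-1/F) + (D+1)/(2*F)*(F*u+1)^((2:ℝ))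

lemma Wf_deriv (D F u : ℝ) (hF : 1 < F) (ht : 0 < F*u+1) :
    HasDerivAt (Wf D F)
      (D*(F*u+1)^(1-2/F) - (2*D+1)*(F*u+1)^(1-1/F) + (D+1)*(F*u+1)) u := by
  have hF0 : (0:ℝ) < F := by linarith
  have h1 := (hd_pow F (2-2/F) u ht.ne').const_mul (D/(2*(F-1)))
  have h2 := (hd_pow F (2-1/F) u ht.ne').const_mul ((2*D+1)/(2*F-1))
  have h3 := (hd_pow F ((2:ℝ)) u ht.ne').const_mul ((D+1)/(2*F))
  have h4 := (((h1.sub h2).add h3).const_add ((F-D-1)/(2*F*(F-1)*(2*F-1))))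
  have he : Wf D F = fun u => (F-D-1)/(2*F*(F-1)*(2*F-1)) +
      (D/(2*(F-1))*(F*u+1)^(2-2/F) - (2*D+1)/(2*F-1)*(F*u+1)^(2-1/F)
        + (D+1)/(2*F)*(F*u+1)^((2:ℝ))) := by
    funext v; unfold Wf; ring
  rw [he]
  refine h4.congr_deriv ?_
  have e1 : (2-2/F) - 1 = 1 - 2/F := by ring
  have e2 : (2-1/F) - 1 = 1 - 1/F := by ring
  have e3 : (F*u+1)^((2:ℝ)-1) = F*u+1 := by norm_num
  rw [e1, e2, e3]
  have hne1 : F - 1 ≠ 0 := by linarith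
  have hne2 : (2:ℝ)*F - 1 ≠ 0 := by linarith
  field_simp

lemma key_alg (D F h₀ x s : ℝ) (hF0 : F ≠ 0) (hne1 : F - 1 ≠ 0) (hne2 : 2*F-1 ≠ 0)
    (hs0 : s ≠ 0) (hx0 : x ≠ 0) (hP : D - (2*D+1)*s + (D+1)*s^2 ≠ 0) :
    (-D/(2*(F-1)) + (2*D+1)/(2*F-1)*s - (D+1)/(2*F)*s^2) *
        ((x*x*s*s) * ((D - (2*D+1)*s + (D+1)*s^2)^2
            + 2*(-D/(2*(F-1)) + (2*D+1)/(2*F-1)*s - (D+1)/(2*F)*s^2)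
              * (D*(F-2) - (2*D+1)*(F-1)*s + (D+1)*F*s^2))
          - 2*h₀*(D*(F-2) - (2*D+1)*(F-1)*s + (D+1)*F*s^2))
        / (D - (2*D+1)*s + (D+1)*s^2)^3
    = (h₀ - (h₀ + D/(2*(F-1))*(x*x*s*s) - (2*D+1)/(2*F-1)*(x*x*s*s*s)
          + (D+1)/(2*F)*(x*x*s*s*s*s))) *
      (((D*x - (2*D+1)*(x*s) + (D+1)*(x*s*s))^2
          - 2*(h₀ + D/(2*(F-1))*(x*x*s*s) - (2*D+1)/(2*F-1)*(x*x*s*s*s)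
              + (D+1)/(2*F)*(x*x*s*s*s*s))
            * (D*((1-2/F)*(s*s)⁻¹*F) - (2*D+1)*((1-1/F)*s⁻¹*F) + (D+1)*F))
        / (D*x - (2*D+1)*(x*s) + (D+1)*(x*s*s))^3) * x := by
  have hv : (D*x - (2*D+1)*(x*s) + (D+1)*(x*s*s)) = x * (D - (2*D+1)*s + (D+1)*s^2) := by
    ring
  rw [hv]
  field_simp
  ring

noncomputable def Pq (D s : ℝ) : ℝ := D - (2*D+1)*s + (D+1)*s^2
noncomputable def Qq (D F s : ℝ) : ℝ :=
  -D/(2*(F-1)) + (2*D+1)/(2*F-1)*s - (D+1)/(2*F)*s^2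
noncomputable def Rq (D F s : ℝ) : ℝ :=
  D*(F-2) - (2*D+1)*(F-1)*s + (D+1)*F*s^2

/-- (Lemma 3.4(a) of the paper.) For `μ ∈ Λ` with `F ≠ 2`, with
`ℛ_μ = ((V')² - 2VV'')/(V')³`, one has
`(h₀(μ) - V_μ(u)) ℛ_μ(u) (Fu+1)^(1-2/F) → (F-2)h₀(μ)/(D(F-1)) ≠ 0` as `u → (-1/F)⁺`. -/
theorem quantifier_R_left (D F : ℝ) (hF : 1 < F) (hFne : F ≠ 2) (hD : D < -(1/2))
    (hDF : 0 < D + F) (V Vp : ℝ → ℝ) (hV0 : V 0 = 0)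
    (hVp : ∀ u, -1/F < u →
      Vp u = (F*u+1) * ((F*u+1) ^ (-(1/F)) - 1) * (D * (F*u+1) ^ (-(1/F)) - D - 1))
    (hV : ∀ u, -1/F < u → HasDerivAt V (Vp u) u) :
    Tendsto (fun u =>
        ((F-D-1)/(2*F*(F-1)*(2*F-1)) - V u)
          * ((Vp u ^ 2 - 2 * V u * deriv Vp u) / (Vp u ^ 3))
          * (F*u+1) ^ (1 - 2/F))
      (𝓝[>] (-1/F))
      (𝓝 ((F-2) * ((F-D-1)/(2*F*(F-1)*(2*F-1))) / (D*(F-1))))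
    ∧ (F-2) * ((F-D-1)/(2*F*(F-1)*(2*F-1))) / (D*(F-1)) ≠ 0 := by
  have hF0 : (0:ℝ) < F := by linarith
  have hF1 : (0:ℝ) < F - 1 := by linarith
  have h2F1 : (0:ℝ) < 2*F - 1 := by linarith
  have hDneg : D < 0 := by linarith
  have hD0 : D ≠ 0 := hDneg.ne
  set h₀ := (F-D-1)/(2*F*(F-1)*(2*F-1)) with hh0
  have hmem : ∀ u ∈ Set.Ioi (-1/F), 0 < F*u+1 := by
    intro u hu
    have h1 : F * (-1/F) < F * u := mul_lt_mul_of_pos_left hu hF0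
    have h2 : F * (-1/F) = -1 := by field_simp
    linarith
  -- Vp expanded
  have hVpE : ∀ u ∈ Set.Ioi (-1/F),
      Vp u = D * (F*u+1)^(1-2/F) - (2*D+1)*(F*u+1)^(1-1/F) + (D+1)*(F*u+1) := by
    intro u hu
    rw [hVp u hu]; exact form1 D F _ (hmem u hu)
  -- W has derivative Vp on the interval
  have hWd : ∀ u ∈ Set.Ioi (-1/F), HasDerivAt (Wf D F) (Vp u) u := by
    intro u hu
    rw [hVpE u hu]; exact Wf_deriv D F u hF (hmem u hu)
  have h0mem : (0:ℝ) ∈ Set.Ioi (-1/F) := by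
    have : (0:ℝ) < 1/F := by positivity
    simp only [Set.mem_Ioi]; rw [neg_div]; linarith
  have hW0 : Wf D F 0 = 0 := by
    have hne1 : F - 1 ≠ 0 := hF1.ne'
    have hne2 : 2*F - 1 ≠ 0 := h2F1.ne'
    unfold Wf
    simp only [mul_zero, zero_add, one_rpow, mul_one]
    rw [div_add_div _ _ (by simp [hne1, hne2, hF0.ne']) (by simp [hne1]), div_sub_div _ _ (by simp [hne1, hne2, hF0.ne']) hne2, div_add_div _ _ (by simp [hne1, hne2, hF0.ne']) (by simp [hF0.ne']), div_eq_zero_iff]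
    left; ring
  -- V = W on the interval
  have hVW : Set.EqOn V (Wf D F) (Set.Ioi (-1/F)) := by
    apply Convex.eqOn_of_fderivWithin_eq (𝕜 := ℝ) (convex_Ioi _) ?_ ?_ (isOpen_Ioi.uniqueDiffOn)
      ?_ h0mem (by rw [hV0, hW0])
    · exact fun u hu => ((hV u hu).differentiableAt).differentiableWithinAt
    · exact fun u hu => ((hWd u hu).differentiableAt).differentiableWithinAt
    · intro x hx
      rw [fderivWithin_of_isOpen isOpen_Ioi hx, fderivWithin_of_isOpen isOpen_Ioi hx,
        (hV x hx).hasFDerivAt.fderiv, (hWd x hx).hasFDerivAt.fderiv]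
  -- deriv Vp on the interval
  have hdVp : ∀ u ∈ Set.Ioi (-1/F), deriv Vp u =
      D*((1-2/F) * (F*u+1)^(1-2/F-1) * F) - (2*D+1)*((1-1/F) * (F*u+1)^(1-1/F-1) * F)
        + (D+1)*F := by
    intro u hu
    have ht := hmem u hu
    have hG : HasDerivAt
        (fun v => D * (F*v+1)^(1-2/F) - (2*D+1)*(F*v+1)^(1-1/F) + (D+1)*(F*v+1))
        (D*((1-2/F) * (F*u+1)^(1-2/F-1) * F) - (2*D+1)*((1-1/F) * (F*u+1)^(1-1/F-1) * F)
          + (D+1)*F) u := by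
      exact (((hd_pow F (1-2/F) u ht.ne').const_mul D).sub
        ((hd_pow F (1-1/F) u ht.ne').const_mul (2*D+1))).add ((hd_affine F u).const_mul (D+1))
    have hEq : Vp =ᶠ[𝓝 u] (fun v => D * (F*v+1)^(1-2/F) - (2*D+1)*(F*v+1)^(1-1/F)
        + (D+1)*(F*v+1)) := by
      filter_upwards [isOpen_Ioi.mem_nhds hu] with v hv
      exact hVpE v hv
    rw [hEq.deriv_eq, hG.deriv]
  -- tendsto of t and s
  have htt : Tendsto (fun u => F*u+1) (𝓝[>] (-1/F)) (𝓝[>] (0:ℝ)) := by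
    apply tendsto_nhdsWithin_of_tendsto_nhds_of_eventually_within
    · have hc : Tendsto (fun u => F*u+1) (𝓝 (-1/F)) (𝓝 (F*(-1/F)+1)) := by
        exact ((continuous_const.mul continuous_id).add continuous_const).tendsto _
      have h2 : F*(-1/F)+1 = 0 := by field_simp; norm_num
      rw [h2] at hc
      exact hc.mono_left nhdsWithin_le_nhds
    · filter_upwards [self_mem_nhdsWithin] with u hu
      exact hmem u hu
  have hts : Tendsto (fun u => (F*u+1)^(1/F)) (𝓝[>] (-1/F)) (𝓝 (0:ℝ)) := by
    have hc : ContinuousAt (fun t : ℝ => t^(1/F)) 0 :=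
      Real.continuousAt_rpow_const 0 (1/F) (Or.inr (by positivity))
    have h0 : (0:ℝ)^((1:ℝ)/F) = 0 := Real.zero_rpow (by positivity : (0:ℝ) < 1/F).ne'
    have := hc.tendsto.comp (htt.mono_right nhdsWithin_le_nhds)
    rw [h0] at this
    exact this
  have h22F : (0:ℝ) < 2 - 2/F := by
    have : 2/F < 2 := by rw [div_lt_iff₀ hF0]; nlinarith
    linarith
  have hty : Tendsto (fun u => (F*u+1)^(2-2/F)) (𝓝[>] (-1/F)) (𝓝 (0:ℝ)) := by
    have hc : ContinuousAt (fun t : ℝ => t^(2-2/F)) 0 :=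
      Real.continuousAt_rpow_const 0 (2-2/F) (Or.inr h22F.le)
    have h0 : (0:ℝ)^(2-2/F) = 0 := Real.zero_rpow h22F.ne'
    have := hc.tendsto.comp (htt.mono_right nhdsWithin_le_nhds)
    rw [h0] at this
    exact this
  have hPc : Continuous (Pq D) :=
    (continuous_const.sub (continuous_const.mul continuous_id)).add
      (continuous_const.mul (continuous_pow 2))
  have hQc : Continuous (Qq D F) :=
    (continuous_const.add (continuous_const.mul continuous_id)).sub
      (continuous_const.mul (continuous_pow 2))
  have hRc : Continuous (Rq D F) :=
    (continuous_const.sub (continuous_const.mul continuous_id)).add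
      (continuous_const.mul (continuous_pow 2))
  have hPt : Tendsto (fun u => Pq D ((F*u+1)^(1/F))) (𝓝[>] (-1/F)) (𝓝 (Pq D 0)) :=
    (hPc.tendsto 0).comp hts
  have hQt : Tendsto (fun u => Qq D F ((F*u+1)^(1/F))) (𝓝[>] (-1/F)) (𝓝 (Qq D F 0)) :=
    (hQc.tendsto 0).comp hts
  have hRt : Tendsto (fun u => Rq D F ((F*u+1)^(1/F))) (𝓝[>] (-1/F)) (𝓝 (Rq D F 0)) :=
    (hRc.tendsto 0).comp hts
  have hPD : Pq D 0 = D := by simp [Pq]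
  have hE : Tendsto (fun u => Qq D F ((F*u+1)^(1/F)) *
      ((F*u+1)^(2-2/F) * (Pq D ((F*u+1)^(1/F))^2
          + 2*Qq D F ((F*u+1)^(1/F))*Rq D F ((F*u+1)^(1/F)))
        - 2*h₀*Rq D F ((F*u+1)^(1/F)))
      / (Pq D ((F*u+1)^(1/F)))^3) (𝓝[>] (-1/F))
      (𝓝 (Qq D F 0 * (0*(Pq D 0^2 + 2*Qq D F 0*Rq D F 0) - 2*h₀*Rq D F 0)
        / (Pq D 0)^3)) := by
    apply Tendsto.div
    · exact hQt.mul ((hty.mul ((hPt.pow 2).add ((hQt.const_mul 2).mul hRt))).sub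
        (hRt.const_mul (2*h₀)))
    · exact hPt.pow 3
    · rw [hPD]; exact pow_ne_zero 3 hD0
  have hval : Qq D F 0 * (0*(Pq D 0^2 + 2*Qq D F 0*Rq D F 0) - 2*h₀*Rq D F 0)
      / (Pq D 0)^3 = (F-2) * h₀ / (D*(F-1)) := by
    simp only [Pq, Qq, Rq]
    norm_num
    field_simp
  rw [hval] at hE
  have hPne : ∀ᶠ u in 𝓝[>] (-1/F), Pq D ((F*u+1)^(1/F)) ≠ 0 :=
    hPt.eventually_ne (by rw [hPD]; exact hD0)
  have hcong : ∀ᶠ u in 𝓝[>] (-1/F),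
      Qq D F ((F*u+1)^(1/F)) *
        ((F*u+1)^(2-2/F) * (Pq D ((F*u+1)^(1/F))^2
            + 2*Qq D F ((F*u+1)^(1/F))*Rq D F ((F*u+1)^(1/F)))
          - 2*h₀*Rq D F ((F*u+1)^(1/F)))
        / (Pq D ((F*u+1)^(1/F)))^3
      = (h₀ - V u) * ((Vp u ^ 2 - 2 * V u * deriv Vp u) / (Vp u ^ 3))
          * (F*u+1) ^ (1 - 2/F) := by
    filter_upwards [self_mem_nhdsWithin, hPne] with u hu hP
    have ht := hmem u hu
    have hVu : V u = Wf D F u := hVW hu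
    rw [hVu, hVpE u hu, hdVp u hu]
    unfold Wf Pq Qq Rq
    rw [← hh0]
    set s := (F*u+1)^(1/F) with hsd
    set x := (F*u+1)^(1-2/F) with hxd
    have hs0 : s ≠ 0 := by rw [hsd]; exact (rpow_pos_of_pos ht _).ne'
    have hx0 : x ≠ 0 := by rw [hxd]; exact (rpow_pos_of_pos ht _).ne'
    have hmul : ∀ a b : ℝ, (F*u+1)^(a+b) = (F*u+1)^a * (F*u+1)^b :=
      fun a b => rpow_add ht a b
    have r2 : (F*u+1)^(2-2/F) = x*x*s*s := by
      rw [hxd, hsd, show (2-2/F:ℝ) = ((1-2/F)+(1-2/F))+(1/F)+(1/F) by ring,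
        hmul, hmul, hmul]
    have r3 : (F*u+1)^(2-1/F) = x*x*s*s*s := by
      rw [hxd, hsd, show (2-1/F:ℝ) = (((1-2/F)+(1-2/F))+(1/F)+(1/F))+(1/F) by ring,
        hmul, hmul, hmul, hmul]
    have r4 : (F*u+1)^((2:ℝ)) = x*x*s*s*s*s := by
      have : x*x*s*s*s*s = (F*u+1)^((2:ℝ)) := by
        rw [hxd, hsd, ← hmul, ← hmul, ← hmul, ← hmul, ← hmul,
          show (1-2/F)+(1-2/F)+(1/F)+(1/F)+(1/F)+(1/F) = (2:ℝ) by ring]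
      exact this.symm
    have r5 : (F*u+1)^(1-1/F) = x*s := by
      rw [hxd, hsd, show (1-1/F:ℝ) = (1-2/F)+(1/F) by ring, hmul]
    have r6 : (F*u+1)^(1-2/F-1) = (s*s)⁻¹ := by
      rw [hsd, show (1-2/F-1:ℝ) = -((1/F)+(1/F)) by ring, rpow_neg ht.le, hmul]
    have r7 : (F*u+1)^(1-1/F-1) = s⁻¹ := by
      rw [hsd, show (1-1/F-1:ℝ) = -(1/F) by ring, rpow_neg ht.le]
    have r8 : x*s*s = F*u+1 := by
      rw [hxd, hsd, ← hmul, ← hmul, show ((1-2/F)+(1/F))+(1/F) = (1:ℝ) by ring, rpow_one]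
    rw [r2, r3, r4, r5, r6, r7, ← r8]
    exact key_alg D F h₀ x s hF0.ne' hF1.ne' h2F1.ne' hs0 hx0 (by simpa [Pq] using hP)
  refine ⟨hE.congr' hcong, ?_⟩
  · have hh0pos : 0 < h₀ := by
      rw [hh0]; apply div_pos (by linarith) (by positivity)
    exact div_ne_zero (mul_ne_zero (sub_ne_zero.mpr hFne) hh0pos.ne')
      (mul_ne_zero hD0 hF1.ne')
end
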